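/- Under the hypotheses that |T̃_det| ≤ S_T ≤ S_*, |Δ̃_det| ≤ S_Δ, ||w||_∞ ≤ λ/||A||_1, and α_del^2 ≥ 4nλ^2/||A||_1^2 + 8 θ_{S_T,S_Δ}^2 |Δ̃_det| ||x_{Δ̃_det}||_∞^2, every index i ∈ T̃_det with x_i = 0 satisfies |x̂_i| ≤ α_del for the least-squares estimate x̂ computed on T̃_det, and is therefore deleted by thresholding at α_del. -/

import Mathlib

private lemma sum_extend17 {ι : Type*} [Fintype ι] (T : Finset ι) (g : ι → ℝ)
    (hg : ∀ i ∉ T, g i = 0) : ∑ i, g i = ∑ i : T, g (i : ι) := by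
  rw [Finset.sum_coe_sort T g]
  exact (Finset.sum_subset (Finset.subset_univ T) (fun x _ hx => hg x hx)).symm

private lemma cs17 {ι : Type*} [Fintype ι] (f g : ι → ℝ) :
    ∑ i, f i * g i ≤ Real.sqrt (∑ i, f i ^ 2) * Real.sqrt (∑ i, g i ^ 2) := by
  have h := Finset.sum_mul_sq_le_sq_mul_sq Finset.univ f g
  refine (le_abs_self _).trans ?_
  rw [← Real.sqrt_sq_eq_abs, ← Real.sqrt_mul (by positivity)]
  exact Real.sqrt_le_sqrt h


private lemma swap317 {α β γ : Type*} [Fintype α] [Fintype β] [Fintype γ] (f : α → β → γ → ℝ) :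
    ∑ a, ∑ b, ∑ c, f a b c = ∑ c, ∑ a, ∑ b, f a b c := by
  calc ∑ a, ∑ b, ∑ c, f a b c = ∑ a, ∑ c, ∑ b, f a b c :=
        Finset.sum_congr rfl fun a _ => Finset.sum_comm
    _ = ∑ c, ∑ a, ∑ b, f a b c := Finset.sum_comm

/-- Deletion condition (Lemma 3): under the stated conditions, every zero coefficient
in the detected set is deleted by thresholding the LS estimate at α_del. -/
theorem stmt_17 {n m : ℕ} (A : Matrix (Fin n) (Fin m) ℝ)
    (Tdet Δdet : Finset (Fin m)) (hdisj : Disjoint Tdet Δdet)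
    (ST SΔ : ℕ) (hTcard : Tdet.card ≤ ST) (hΔcard : Δdet.card ≤ SΔ)
    (x : Fin m → ℝ) (hxsupp : ∀ i, x i ≠ 0 → i ∈ Tdet ∪ Δdet)
    (w y : Fin n → ℝ) (hy : y = fun j => (∑ i, A j i * x i) + w j)
    (normA lam δ θ αdel binf : ℝ)
    (hnormA : 0 < normA) (hlam : 0 ≤ lam) (hθ : 0 ≤ θ) (hδ0 : 0 ≤ δ)
    (hδ : δ < 1 / 2) (hαdel0 : 0 ≤ αdel)
    -- δ bounds the restricted isometry constant of order S_T (so ST ≤ S_*)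
    (hRIP : ∀ T : Finset (Fin m), T.card ≤ ST → ∀ c : Fin m → ℝ,
      (∀ i, c i ≠ 0 → i ∈ T) →
      (1 - δ) * ∑ i, (c i) ^ 2 ≤ ∑ j, (∑ i, A j i * c i) ^ 2 ∧
      ∑ j, (∑ i, A j i * c i) ^ 2 ≤ (1 + δ) * ∑ i, (c i) ^ 2)
    -- θ bounds the restricted orthogonality constant θ_{S_T,S_Δ}
    (hRO : ∀ T₁ T₂ : Finset (Fin m), Disjoint T₁ T₂ → T₁.card ≤ ST → T₂.card ≤ SΔ →
      ∀ (c₁ : T₁ → ℝ) (c₂ : T₂ → ℝ),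
      |∑ i : T₁, c₁ i * ∑ kk : T₂, (∑ j, A j (i : Fin m) * A j (kk : Fin m)) * c₂ kk|
        ≤ θ * Real.sqrt (∑ i, (c₁ i) ^ 2) * Real.sqrt (∑ kk, (c₂ kk) ^ 2))
    (hw : ∀ j, |w j| ≤ lam / normA)
    (hbinf : ∀ i ∈ Δdet, |x i| ≤ binf)
    (hαdel : αdel ^ 2 ≥ 4 * n * lam ^ 2 / normA ^ 2
      + 8 * θ ^ 2 * Δdet.card * binf ^ 2)
    (xhat : Tdet → ℝ)
    (hxhat : xhat = (Matrix.of (fun i kk : Tdet => ∑ j, A j (i : Fin m) * A j (kk : Fin m)))⁻¹.mulVec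
      (fun i : Tdet => ∑ j, A j (i : Fin m) * y j)) :
    ∀ i : Tdet, x (i : Fin m) = 0 → |xhat i| ≤ αdel := by 
  classical
  set G : Matrix Tdet Tdet ℝ :=
    Matrix.of (fun i kk : Tdet => ∑ j, A j (i : Fin m) * A j (kk : Fin m)) with hGdef
  -- extension by zero
  set ext : (Tdet → ℝ) → (Fin m → ℝ) :=
    fun c i'' => if h : i'' ∈ Tdet then c ⟨i'', h⟩ else 0 with hextdef
  have hext1 : ∀ (c : Tdet → ℝ) (f : Fin m → ℝ),
      ∑ i'', f i'' * ext c i'' = ∑ i' : Tdet, f (i' : Fin m) * c i' := by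
    intro c f
    rw [sum_extend17 Tdet _ (fun i'' h => by simp [hextdef, h])]
    exact Finset.sum_congr rfl fun i' _ => by simp [hextdef]
  have hext2 : ∀ c : Tdet → ℝ,
      ∑ i'', (ext c i'') ^ 2 = ∑ i' : Tdet, (c i') ^ 2 := by
    intro c
    rw [sum_extend17 Tdet _ (fun i'' h => by simp [hextdef, h])]
    exact Finset.sum_congr rfl fun i' _ => by simp [hextdef]
  -- quadratic form identity
  have hquad : ∀ c : Tdet → ℝ,
      ∑ i' : Tdet, c i' * (∑ kk : Tdet, G i' kk * c kk)
        = ∑ j, (∑ i' : Tdet, A j (i' : Fin m) * c i') ^ 2 := by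
    intro c
    have hrhs : ∀ j, (∑ i' : Tdet, A j (i' : Fin m) * c i') ^ 2
        = ∑ i' : Tdet, ∑ kk : Tdet,
            c i' * (A j (i' : Fin m) * A j (kk : Fin m) * c kk) := by
      intro j
      rw [sq, Finset.sum_mul_sum]
      exact Finset.sum_congr rfl fun i' _ => Finset.sum_congr rfl fun kk _ => by ring
    have hlhs : ∑ i' : Tdet, c i' * (∑ kk : Tdet, G i' kk * c kk)
        = ∑ i' : Tdet, ∑ kk : Tdet, ∑ j,
            c i' * (A j (i' : Fin m) * A j (kk : Fin m) * c kk) := by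
      refine Finset.sum_congr rfl fun i' _ => ?_
      rw [Finset.mul_sum]
      refine Finset.sum_congr rfl fun kk _ => ?_
      simp only [hGdef, Matrix.of_apply]
      rw [Finset.sum_mul, Finset.mul_sum]
      try exact Finset.sum_congr rfl fun j _ => by ring
    simp only [hrhs]
    rw [hlhs]
    exact swap317 _
  -- RIP restricted to Tdet
  have hRIPT : ∀ c : Tdet → ℝ,
      (1 - δ) * ∑ i' : Tdet, (c i') ^ 2
        ≤ ∑ j, (∑ i' : Tdet, A j (i' : Fin m) * c i') ^ 2 := by
    intro c
    have h := (hRIP Tdet hTcard (ext c) (fun i'' h => by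
      by_contra hm; exact h (by simp [hextdef, hm]))).1
    have h2 : ∀ j, ∑ i'', A j i'' * ext c i'' = ∑ i' : Tdet, A j (i' : Fin m) * c i' :=
      fun j => hext1 c (A j)
    rw [hext2 c] at h
    simpa only [h2] using h
  -- positive definiteness and invertibility
  have hPD : G.PosDef := by
    refine Matrix.posDef_iff_dotProduct_mulVec.mpr ?_
    constructor
    · ext i' kk
      simp only [Matrix.conjTranspose_apply, hGdef, Matrix.of_apply, star_trivial]
      exact Finset.sum_congr rfl fun j _ => mul_comm _ _
    · intro c hc
      have hdot : dotProduct (star c) (G.mulVec c)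
          = ∑ i' : Tdet, c i' * (∑ kk : Tdet, G i' kk * c kk) := by
        simp [dotProduct, Matrix.mulVec]
      rw [hdot, hquad c]
      have hc2 : 0 < ∑ i' : Tdet, (c i') ^ 2 := by
        have : ∃ i', c i' ≠ 0 := by
          by_contra h; push_neg at h; exact hc (funext h)
        obtain ⟨i0, h0⟩ := this
        exact Finset.sum_pos' (fun _ _ => sq_nonneg _)
          ⟨i0, Finset.mem_univ _, by positivity⟩
      calc (0:ℝ) < (1 - δ) * ∑ i' : Tdet, (c i') ^ 2 := by nlinarith
        _ ≤ _ := hRIPT c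
  have hdet : IsUnit G.det := isUnit_iff_ne_zero.mpr (ne_of_gt hPD.det_pos)
  -- normal equations
  have hGx : G.mulVec xhat = fun i' : Tdet => ∑ j, A j (i' : Fin m) * y j := by
    rw [hxhat, Matrix.mulVec_mulVec, Matrix.mul_nonsing_inv _ hdet, Matrix.one_mulVec]
  -- decomposition of A x
  have hAx : ∀ j, ∑ i'', A j i'' * x i''
      = (∑ kk : Tdet, A j (kk : Fin m) * x kk) + ∑ k : Δdet, A j (k : Fin m) * x k := by
    intro j
    rw [Finset.sum_coe_sort Tdet (fun kk => A j kk * x kk),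
      Finset.sum_coe_sort Δdet (fun k => A j k * x k), ← Finset.sum_union hdisj]
    refine (Finset.sum_subset (Finset.subset_univ _) (fun i'' _ h => ?_)).symm
    have hx0 : x i'' = 0 := by
      by_contra hx; exact h (hxsupp i'' hx)
    simp [hx0]
  -- error vector and perturbation terms
  set e : Tdet → ℝ := fun i' => xhat i' - x (i' : Fin m) with hedef
  set u : Tdet → ℝ := fun i' =>
    ∑ kk : Δdet, (∑ j, A j (i' : Fin m) * A j (kk : Fin m)) * x (kk : Fin m) with hudef
  set v : Tdet → ℝ := fun i' => ∑ j, A j (i' : Fin m) * w j with hvdef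
  have hcomp : ∀ i' : Tdet, ∑ kk : Tdet, G i' kk * e kk = u i' + v i' := by
    intro i'
    have h0 : ∑ kk : Tdet, G i' kk * xhat kk = ∑ j, A j (i' : Fin m) * y j := by
      have := congrFun hGx i'
      simpa [Matrix.mulVec, dotProduct] using this
    have hy' : ∑ j, A j (i' : Fin m) * y j
        = (∑ kk : Tdet, G i' kk * x (kk : Fin m)) + u i' + v i' := by
      rw [hy]
      simp only [mul_add, Finset.sum_add_distrib]
      have h1 : ∑ j, A j (i' : Fin m) * ∑ i'', A j i'' * x i''
          = (∑ j, A j (i' : Fin m) * ∑ kk : Tdet, A j (kk : Fin m) * x kk)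
            + ∑ j, A j (i' : Fin m) * ∑ k : Δdet, A j (k : Fin m) * x k := by
        rw [← Finset.sum_add_distrib]
        exact Finset.sum_congr rfl fun j _ => by rw [hAx j, mul_add]
      have h2 : ∑ j, A j (i' : Fin m) * ∑ kk : Tdet, A j (kk : Fin m) * x kk
          = ∑ kk : Tdet, G i' kk * x (kk : Fin m) := by
        simp only [Finset.mul_sum]
        rw [Finset.sum_comm]
        refine Finset.sum_congr rfl fun kk _ => ?_
        simp only [hGdef, Matrix.of_apply, Finset.sum_mul]
        exact Finset.sum_congr rfl fun j _ => by ring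
      have h3 : ∑ j, A j (i' : Fin m) * ∑ k : Δdet, A j (k : Fin m) * x k = u i' := by
        simp only [Finset.mul_sum]
        rw [Finset.sum_comm]
        simp only [hudef, Finset.sum_mul]
        refine Finset.sum_congr rfl fun k _ => Finset.sum_congr rfl fun j _ => by ring
      rw [h1, h2, h3]
    have h4 : ∑ kk : Tdet, G i' kk * e kk
        = (∑ kk : Tdet, G i' kk * xhat kk) - ∑ kk : Tdet, G i' kk * x (kk : Fin m) := by
      rw [← Finset.sum_sub_distrib]
      exact Finset.sum_congr rfl fun kk _ => by simp [hedef]; ring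
    rw [h4, h0, hy']
    ring
  -- quantities
  set N : ℝ := ∑ i' : Tdet, (e i') ^ 2 with hNdef
  set Q : ℝ := ∑ j, (∑ i' : Tdet, A j (i' : Fin m) * e i') ^ 2 with hQdef
  set W : ℝ := ∑ j, (w j) ^ 2 with hWdef
  set D : ℝ := ∑ k : Δdet, (x (k : Fin m)) ^ 2 with hDdef
  have hN0 : 0 ≤ N := Finset.sum_nonneg fun _ _ => sq_nonneg _
  have hQ0 : 0 ≤ Q := Finset.sum_nonneg fun _ _ => sq_nonneg _
  have hW0 : 0 ≤ W := Finset.sum_nonneg fun _ _ => sq_nonneg _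
  have hD0 : 0 ≤ D := Finset.sum_nonneg fun _ _ => sq_nonneg _
  set p : ℝ := Real.sqrt N with hpdef
  set q : ℝ := Real.sqrt Q with hqdef
  set r : ℝ := Real.sqrt W with hrdef
  set s : ℝ := Real.sqrt D with hsdef
  have hp2 : p ^ 2 = N := Real.sq_sqrt hN0
  have hq2 : q ^ 2 = Q := Real.sq_sqrt hQ0
  have hr2 : r ^ 2 = W := Real.sq_sqrt hW0
  have hs2 : s ^ 2 = D := Real.sq_sqrt hD0
  have hp0 : 0 ≤ p := Real.sqrt_nonneg _
  have hq0 : 0 ≤ q := Real.sqrt_nonneg _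
  have hr0 : 0 ≤ r := Real.sqrt_nonneg _
  have hs0 : 0 ≤ s := Real.sqrt_nonneg _
  -- Q = <e,u> + <e,v>
  have hQeq : Q = (∑ i' : Tdet, e i' * u i') + ∑ i' : Tdet, e i' * v i' := by
    rw [hQdef, ← hquad e, ← Finset.sum_add_distrib]
    exact Finset.sum_congr rfl fun i' _ => by rw [hcomp i', mul_add]
  -- bound <e,u>
  have hIPu : ∑ i' : Tdet, e i' * u i' ≤ θ * p * s := by
    have h := hRO Tdet Δdet hdisj hTcard hΔcard e (fun k => x (k : Fin m))
    exact (le_abs_self _).trans h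
  -- bound <e,v>
  have hIPv : ∑ i' : Tdet, e i' * v i' ≤ r * q := by
    have hswap : ∑ i' : Tdet, e i' * v i'
        = ∑ j, w j * (∑ i' : Tdet, A j (i' : Fin m) * e i') := by
      simp only [hvdef, Finset.mul_sum]
      rw [Finset.sum_comm]
      exact Finset.sum_congr rfl fun _ _ => Finset.sum_congr rfl fun _ _ => by ring
    rw [hswap]
    exact cs17 w _
  have hkey : Q ≤ θ * p * s + r * q := by
    rw [hQeq]; exact add_le_add hIPu hIPv
  have hNQ : (1 - δ) * N ≤ Q := hRIPT e
  -- bounds on W and D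
  have hW' : W ≤ n * lam ^ 2 / normA ^ 2 := by
    have hb : ∀ j : Fin n, (w j) ^ 2 ≤ lam ^ 2 / normA ^ 2 := by
      intro j
      have h1 : |w j| ^ 2 ≤ (lam / normA) ^ 2 :=
        pow_le_pow_left₀ (abs_nonneg _) (hw j) 2
      rwa [sq_abs, div_pow] at h1
    calc W ≤ (Finset.univ : Finset (Fin n)).card • (lam ^ 2 / normA ^ 2) :=
        Finset.sum_le_card_nsmul _ _ _ (fun j _ => hb j)
      _ = n * lam ^ 2 / normA ^ 2 := by
        simp [Finset.card_univ, nsmul_eq_mul]; ring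
  have hD' : D ≤ Δdet.card * binf ^ 2 := by
    have hb : ∀ k : Δdet, (x (k : Fin m)) ^ 2 ≤ binf ^ 2 := by
      intro k
      have h1 : |x (k : Fin m)| ^ 2 ≤ binf ^ 2 :=
        pow_le_pow_left₀ (abs_nonneg _) (hbinf _ k.2) 2
      rwa [sq_abs] at h1
    calc D ≤ (Finset.univ : Finset {k // k ∈ Δdet}).card • (binf ^ 2) :=
        Finset.sum_le_card_nsmul _ _ _ (fun k _ => hb k)
      _ = Δdet.card * binf ^ 2 := by
        simp [Finset.card_univ, nsmul_eq_mul]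
  -- main algebraic estimate
  have hp2q : p ^ 2 ≤ 2 * q ^ 2 := by
    nlinarith only [hp2, hq2, hNQ, hδ, hN0, mul_nonneg (by linarith : (0:ℝ) ≤ 1/2 - δ) hN0]
  have hmain : N ≤ αdel ^ 2 := by
    have h1 : p ^ 2 ≤ 4 * r ^ 2 + 8 * θ ^ 2 * s ^ 2 := by
      nlinarith only [hkey, hq2, hp2q, hp0, hq0, hr0, hs0, hθ,
        sq_nonneg (p - 4 * θ * s), sq_nonneg (2 * r - q),
        mul_nonneg (mul_nonneg hθ hs0) hp0, mul_nonneg hr0 hq0]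
    have h2 : (8 : ℝ) * θ ^ 2 * s ^ 2 ≤ 8 * θ ^ 2 * (Δdet.card * binf ^ 2) := by
      nlinarith only [sq_nonneg θ, hs2 ▸ hD']
    have h3 : (4 : ℝ) * r ^ 2 ≤ 4 * (n * lam ^ 2 / normA ^ 2) := by
      nlinarith only [hr2 ▸ hW']
    rw [← hp2]
    have : (4 : ℝ) * (n * lam ^ 2 / normA ^ 2) = 4 * n * lam ^ 2 / normA ^ 2 := by ring
    linarith [hαdel]
  -- conclusion
  intro i hxi
  have hei : xhat i = e i := by simp [hedef, hxi]
  have h1 : (e i) ^ 2 ≤ N :=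
    Finset.single_le_sum (f := fun i' : Tdet => (e i') ^ 2)
      (fun _ _ => sq_nonneg _) (Finset.mem_univ i)
  have h2 : |e i| ≤ p := by
    rw [← Real.sqrt_sq_eq_abs]
    exact Real.sqrt_le_sqrt h1
  have h3 : p ≤ αdel := by
    rw [hpdef]
    calc Real.sqrt N ≤ Real.sqrt (αdel ^ 2) := Real.sqrt_le_sqrt hmain
      _ = αdel := Real.sqrt_sq hαdel0
  rw [hei]
  exact h2.trans h3
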